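/- Suppose μ < κ < λ are regular with λ inaccessible and δ^{<κ} = δ for all regular δ ∈ (κ, λ). Then the Laver collapse L(μ, λ) is forcing-equivalent to L(κ, λ) × Col(μ, κ) × L(μ, κ); that is, there is a dense embedding from a dense subset of L(μ, λ) into the product L(μ, κ) × Col(μ, κ) × L(κ, λ). -/

import Mathlib

open Ordinal Cardinal Set

/-- A partial function on ordinals, as an `Option`-valued function. -/
abbrev PartFun := Ordinal.{0} → Option Ordinal.{0}

/-- A Laver-collapse condition is a partial function assigning partial functions to ordinals. -/
abbrev LaverFun := Ordinal → Option PartFun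

/-- `δ` is a regular cardinal (as an ordinal). -/
def IsRegOrd (δ : Ordinal) : Prop := δ.card.IsRegular ∧ δ.card.ord = δ

/-- Domain of a partial function. -/
def pdom (g : PartFun) : Set Ordinal := {a | (g a).isSome}

/-- Domain of a Laver condition. -/
def ldom (p : LaverFun) : Set Ordinal := {δ | (p δ).isSome}

/-- An Easton set: bounded below every regular cardinal. -/
def IsEaston (X : Set Ordinal) : Prop := ∀ α, IsRegOrd α → sSup (X ∩ Set.Iio α) < α

/-- Laver condition with bound below `μ` and whose domain consists of regular cardinals in `S`. -/
def IsLaverOn (μ : Ordinal) (S : Set Ordinal) (p : LaverFun) : Prop :=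
  (∀ δ ∈ ldom p, IsRegOrd δ ∧ δ ∈ S) ∧ IsEaston (ldom p) ∧
    ∃ ξ < μ, ∀ δ g, p δ = some g → ∀ a b, g a = some b → a < ξ ∧ b < δ

/-- A condition of the Laver collapse `𝕃(μ, λ)`. -/
def IsLaver (μ lam : Ordinal) (p : LaverFun) : Prop := IsLaverOn μ (Set.Ioo μ lam) p

/-- Extension of partial functions: `g'` extends `g`. -/
def PFunLE (g' g : PartFun) : Prop := ∀ a b, g a = some b → g' a = some b

/-- The Laver collapse order: `p` extends `q`. -/
def LaverLE (p q : LaverFun) : Prop :=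
  ∀ δ g, q δ = some g → ∃ g', p δ = some g' ∧ PFunLE g' g

/-- A condition of the collapse `Col(μ, κ)`: a partial function from `μ` to `κ` of size `< μ`. -/
def IsCol (μ κ : Ordinal) (g : PartFun) : Prop :=
  (∀ a b, g a = some b → a < μ ∧ b < κ) ∧ Cardinal.mk (pdom g) < Cardinal.lift.{1} μ.card


-- block structure
noncomputable def blk (c : PartFun) (i : Ordinal.{0}) : Ordinal.{0} :=
  Ordinal.limitRecOn i 0 (fun o s => max (s + 1) (((c o).getD 0) + 1))
    (fun o _ ih => Ordinal.bsup o ih)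

theorem blk_zero (c : PartFun) : blk c 0 = 0 := Ordinal.limitRecOn_zero ..

theorem blk_succ (c : PartFun) (o : Ordinal) :
    blk c (o + 1) = max (blk c o + 1) (((c o).getD 0) + 1) := by
  rw [blk, Ordinal.add_one_eq_succ, Ordinal.limitRecOn_succ]; rfl

theorem blk_limit (c : PartFun) {o : Ordinal} (h : Order.IsSuccLimit o) :
    blk c o = Ordinal.bsup o (fun a _ => blk c a) := by
  rw [blk, Ordinal.limitRecOn_limit _ _ _ _ h]; rfl

theorem blk_lt_succ (c : PartFun) (i : Ordinal) : blk c i < blk c (i + 1) := by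
  rw [blk_succ]
  exact lt_of_lt_of_le (lt_of_lt_of_le (Order.lt_succ _) (Ordinal.add_one_eq_succ _).ge)
    (le_max_left _ _)

theorem blk_lt_blk (c : PartFun) {i j : Ordinal} (h : i < j) : blk c i < blk c j := by
  induction j using Ordinal.limitRecOn with
  | zero => exact absurd h ((not_lt_of_ge (zero_le (a := i))))
  | add_one o ih =>
    rcases (Order.lt_succ_iff.mp h).lt_or_eq with h' | h'
    · exact (ih h').trans (blk_lt_succ c o)
    · rw [h']; exact blk_lt_succ c o
  | limit o ho ih =>
    have h1 : i + 1 < o := by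
      rw [Ordinal.add_one_eq_succ]; exact ho.succ_lt h
    calc blk c i < blk c (i + 1) := blk_lt_succ c i
      _ ≤ _ := by rw [blk_limit c ho]; exact Ordinal.le_bsup (fun a _ => blk c a) _ h1

theorem blk_mono (c : PartFun) {i j : Ordinal} (h : i ≤ j) : blk c i ≤ blk c j := by
  rcases eq_or_lt_of_le h with h' | h'
  · rw [h']
  · exact (blk_lt_blk c h').le

theorem blk_congr (c c' : PartFun) (i : Ordinal) (h : ∀ j < i, c j = c' j) :
    blk c i = blk c' i := by
  induction i using Ordinal.limitRecOn with
  | zero => rw [blk_zero, blk_zero]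
  | add_one o ih =>
    rw [blk_succ, blk_succ,
      ih (fun j hj => h j (hj.trans (lt_of_lt_of_le (Order.lt_succ o) (Ordinal.add_one_eq_succ o).ge))),
      h o (lt_of_lt_of_le (Order.lt_succ o) (Ordinal.add_one_eq_succ o).ge)]
  | limit o ho ih =>
    rw [blk_limit c ho, blk_limit c' ho]
    exact congrArg _ (funext fun a => funext fun ha => ih a ha fun j hj => h j (hj.trans ha))

theorem blk_find (c : PartFun) {a ξ : Ordinal} (h : a < blk c ξ) :
    ∃ i, i < ξ ∧ blk c i ≤ a ∧ a < blk c (i + 1) := by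
  induction ξ using Ordinal.limitRecOn with
  | zero => rw [blk_zero] at h; exact absurd h ((not_lt_of_ge (zero_le (a := a))))
  | add_one o ih =>
    rcases lt_or_ge a (blk c o) with ha | ha
    · obtain ⟨i, h1, h2, h3⟩ := ih ha
      exact ⟨i, h1.trans (lt_of_lt_of_le (Order.lt_succ o) (Ordinal.add_one_eq_succ o).ge), h2, h3⟩
    · exact ⟨o, lt_of_lt_of_le (Order.lt_succ o) (Ordinal.add_one_eq_succ o).ge, ha, h⟩
  | limit o ho ih =>
    rw [blk_limit c ho] at h
    obtain ⟨i, hio, hai⟩ := Ordinal.lt_bsup (fun a _ => blk c a) |>.mp h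
    obtain ⟨i', h1, h2, h3⟩ := ih i hio hai
    exact ⟨i', h1.trans hio, h2, h3⟩

theorem blk_unique (c : PartFun) {a i j : Ordinal} (h1 : blk c i ≤ a) (h2 : a < blk c (i + 1))
    (h3 : blk c j ≤ a) (h4 : a < blk c (j + 1)) : i = j := by
  rcases lt_trichotomy i j with h | h | h
  · have : i + 1 ≤ j := by
      rw [Ordinal.add_one_eq_succ]; exact Order.succ_le_of_lt h
    exact absurd ((blk_mono c this).trans h3) (not_le.mpr h2)
  · exact h
  · have : j + 1 ≤ i := by
      rw [Ordinal.add_one_eq_succ]; exact Order.succ_le_of_lt h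
    exact absurd ((blk_mono c this).trans h1) (not_le.mpr h4)

theorem blk_lt_ord {κ : Cardinal} (hκ : κ.IsRegular) (c : PartFun)
    (hv : ∀ j, ((c j).getD 0) < κ.ord) : ∀ i, i < κ.ord → blk c i < κ.ord := by
  have hlim : Order.IsSuccLimit κ.ord := Cardinal.isSuccLimit_ord hκ.aleph0_le
  intro i
  induction i using Ordinal.limitRecOn with
  | zero => intro _; rw [blk_zero]; exact hlim.pos
  | add_one o ih =>
    intro hi
    rw [blk_succ]
    have ho : o < κ.ord := lt_of_le_of_lt (by
      rw [Ordinal.add_one_eq_succ]; exact Order.le_succ o) hi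
    refine max_lt ?_ ?_
    · have := hlim.succ_lt (ih ho)
      rwa [← Ordinal.add_one_eq_succ] at this
    · have := hlim.succ_lt (hv o)
      rwa [← Ordinal.add_one_eq_succ] at this
  | limit o ho ih =>
    intro hio
    rw [blk_limit c ho]
    refine Cardinal.bsup_lt_ord_of_isRegular hκ ?_ (fun j hj => ih j hj (hj.trans hio))
    exact Cardinal.lt_ord.mp hio

def Tot (δ s t : Ordinal) (g : PartFun) : Prop :=
  (∀ a, (g a).isSome ↔ s ≤ a ∧ a < t) ∧ ∀ a b, g a = some b → b < δ

def DecOK (κo δ : Ordinal) (u c : PartFun) (a i : Ordinal) : Prop :=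
  blk c i ≤ a ∧ a < blk c (i + 1) ∧ blk c (i + 1) < κo ∧ ∃ v, u i = some v ∧ v < δ

theorem decOK_unique {κo δ : Ordinal} {u c : PartFun} {a i j : Ordinal}
    (h : DecOK κo δ u c a i) (h' : DecOK κo δ u c a j) : i = j :=
  blk_unique c h.1 h.2.1 h'.1 h'.2.1

open Classical in
noncomputable def decF (bd : Ordinal → Ordinal → Ordinal → Ordinal → PartFun)
    (κo δ : Ordinal) (u c : PartFun) : PartFun := fun a =>
  if h : ∃ i, DecOK κo δ u c a i then
    bd δ (blk c h.choose) (blk c (h.choose + 1)) ((u h.choose).getD 0) a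
  else none

theorem decF_eq (bd : Ordinal → Ordinal → Ordinal → Ordinal → PartFun)
    {κo δ : Ordinal} {u c : PartFun} {a i : Ordinal} (h : DecOK κo δ u c a i) :
    decF bd κo δ u c a = bd δ (blk c i) (blk c (i + 1)) ((u i).getD 0) a := by
  have hex : ∃ i, DecOK κo δ u c a i := ⟨i, h⟩
  rw [decF, dif_pos hex, decOK_unique hex.choose_spec h]

theorem decF_some (bd : Ordinal → Ordinal → Ordinal → Ordinal → PartFun)
    {κo δ : Ordinal} {u c : PartFun} {a : Ordinal} {b : Ordinal}
    (h : decF bd κo δ u c a = some b) :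
    ∃ i, DecOK κo δ u c a i ∧ bd δ (blk c i) (blk c (i + 1)) ((u i).getD 0) a = some b := by
  by_cases hex : ∃ i, DecOK κo δ u c a i
  · exact ⟨hex.choose, hex.choose_spec, by rw [decF, dif_pos hex] at h; exact h⟩
  · rw [decF, dif_neg hex] at h; exact absurd h (by simp)

noncomputable def fillF (ξ : Ordinal) (g : PartFun) : PartFun := fun a =>
  if a < ξ then some ((g a).getD 0) else none

noncomputable def clipF (δ s t : Ordinal) (T : PartFun) : PartFun := fun a =>
  if s ≤ a ∧ a < t then some (if (T a).getD 0 < δ then (T a).getD 0 else 0) else none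

theorem clipF_tot {δ s t : Ordinal} (hδ : 0 < δ) (T : PartFun) : Tot δ s t (clipF δ s t T) := by
  constructor
  · intro a; rw [clipF]; split <;> simp_all
  · intro a b hb; rw [clipF] at hb; split at hb
    · simp only [Option.some_inj] at hb; subst hb; split <;> assumption
    · exact absurd hb (by simp)

theorem clipF_val {δ s t : Ordinal} {T : PartFun} {a b : Ordinal} (hT : T a = some b)
    (hb : b < δ) (h1 : s ≤ a) (h2 : a < t) : clipF δ s t T a = some b := by
  rw [clipF, if_pos ⟨h1, h2⟩, hT]; simp [Option.getD_some, if_pos hb]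

noncomputable def encF (be : Ordinal → Ordinal → Ordinal → PartFun → Ordinal)
    (δ ξ : Ordinal) (c T : PartFun) : PartFun := fun i =>
  if i < ξ then some (be δ (blk c i) (blk c (i + 1)) (clipF δ (blk c i) (blk c (i + 1)) T))
  else none

theorem regOrd_pos {α : Ordinal} (h : IsRegOrd α) : 0 < α := by
  rw [← h.2]; exact (Cardinal.isSuccLimit_ord h.1.aleph0_le).pos

theorem sSup_inter_lt {X : Set Ordinal} {α : Ordinal} (h0 : 0 < α)
    (hb : ∀ x ∈ X ∩ Set.Iio α, x ≤ β) (hβ : β < α) : sSup (X ∩ Set.Iio α) < α := by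
  rcases (X ∩ Set.Iio α).eq_empty_or_nonempty with he | hne
  · rw [he, csSup_empty]; exact h0
  · exact (csSup_le hne hb).trans_lt hβ

theorem isEaston_subset {X Y : Set Ordinal} (hXY : X ⊆ Y) (hY : IsEaston Y) : IsEaston X := by
  intro α hα
  refine sSup_inter_lt (regOrd_pos hα) (β := sSup (Y ∩ Set.Iio α)) ?_ (hY α hα)
  intro x hx
  exact le_csSup ⟨α, fun y hy => hy.2.le⟩ ⟨hXY hx.1, hx.2⟩

theorem isEaston_union {X Y : Set Ordinal} (hX : IsEaston X) (hY : IsEaston Y) :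
    IsEaston (X ∪ Y) := by
  intro α hα
  refine sSup_inter_lt (regOrd_pos hα)
    (β := max (sSup (X ∩ Set.Iio α)) (sSup (Y ∩ Set.Iio α))) ?_ (max_lt (hX α hα) (hY α hα))
  rintro x ⟨hx | hx, hxα⟩
  · exact le_trans (le_csSup (s := X ∩ Set.Iio α) ⟨α, fun y hy => hy.2.le⟩ ⟨hx, hxα⟩)
      (le_max_left _ _)
  · exact le_trans (le_csSup (s := Y ∩ Set.Iio α) ⟨α, fun y hy => hy.2.le⟩ ⟨hx, hxα⟩)
      (le_max_right _ _)

theorem isEaston_singleton (x : Ordinal) : IsEaston {x} := by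
  intro α hα
  rcases lt_or_ge x α with h | h
  · refine sSup_inter_lt (regOrd_pos hα) (β := x) ?_ h
    rintro y ⟨hy, _⟩
    exact le_of_eq hy
  · refine sSup_inter_lt (regOrd_pos hα) (β := 0) ?_ (regOrd_pos hα)
    rintro y ⟨hy, hyα⟩
    rw [Set.mem_singleton_iff] at hy
    subst hy
    exact absurd hyα (not_lt.mpr h)

theorem fillF_lt {ξ δ : Ordinal} {g : PartFun} (hg : ∀ a b, g a = some b → b < δ) (hδ : 0 < δ) :
    ∀ a b, fillF ξ g a = some b → a < ξ ∧ b < δ := by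
  intro a b h
  rw [fillF] at h
  split at h
  · refine ⟨by assumption, ?_⟩
    rw [Option.some_inj] at h
    subst h
    cases hga : g a with
    | none => simpa [hga] using hδ
    | some v => simpa [hga] using hg a v hga
  · exact absurd h (by simp)

theorem fillF_ext {ξ : Ordinal} {g : PartFun} (hdom : ∀ a b, g a = some b → a < ξ) :
    PFunLE (fillF ξ g) g := by
  intro a b h
  rw [fillF, if_pos (hdom a b h), h]
  rfl

theorem fillF_tot (ξ : Ordinal) (g : PartFun) : ∀ i, ((fillF ξ g i).isSome) ↔ i < ξ := by
  intro i
  rw [fillF]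
  split <;> simp_all

theorem encF_val {be : Ordinal → Ordinal → Ordinal → PartFun → Ordinal} {δ ξ : Ordinal}
    {c T : PartFun} {i b : Ordinal} (h : encF be δ ξ c T i = some b) :
    i < ξ ∧ b = be δ (blk c i) (blk c (i + 1)) (clipF δ (blk c i) (blk c (i + 1)) T) := by
  rw [encF] at h
  split at h
  · exact ⟨by assumption, (Option.some_inj.mp h).symm⟩
  · exact absurd h (by simp)

theorem encF_tot (be : Ordinal → Ordinal → Ordinal → PartFun → Ordinal) (δ ξ : Ordinal)
    (c T : PartFun) : ∀ i, (encF be δ ξ c T i).isSome ↔ i < ξ := by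
  intro i
  rw [encF]
  split <;> simp_all

theorem encF_eq {be : Ordinal → Ordinal → Ordinal → PartFun → Ordinal} {δ ξ : Ordinal}
    (c T : PartFun) {i : Ordinal} (h : i < ξ) :
    encF be δ ξ c T i = some (be δ (blk c i) (blk c (i + 1))
      (clipF δ (blk c i) (blk c (i + 1)) T)) := by
  rw [encF]
  exact if_pos h

/-- For regular `μ < κ < λ` with `λ` inaccessible (and `δ^{<κ} = δ` for regular
`δ ∈ (κ, λ)`), the Laver collapse `𝕃(μ, λ)` is forcing-equivalent to
`𝕃(μ, κ) × Col(μ, κ) × 𝕃(κ, λ)`: there is a dense embedding (an order-isomorphism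
onto a dense subset of the product) defined on a dense subset of `𝕃(μ, λ)`. -/
theorem statement17 (μ κ lam : Cardinal) (hμ : μ.IsRegular) (hκ : κ.IsRegular)
    (hlam : lam.IsInaccessible) (hμκ : μ < κ) (hκlam : κ < lam)
    (hpow : ∀ δ : Ordinal, IsRegOrd δ → κ.ord < δ → δ < lam.ord → δ.card ^< κ = δ.card) :
    ∃ (D : Set LaverFun) (e : LaverFun → LaverFun × PartFun × LaverFun),
      (∀ p ∈ D, IsLaver μ.ord lam.ord p) ∧
      (∀ p, IsLaver μ.ord lam.ord p → ∃ d ∈ D, LaverLE d p) ∧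
      (∀ p ∈ D, IsLaver μ.ord κ.ord (e p).1 ∧ IsCol μ.ord κ.ord (e p).2.1 ∧
        IsLaver κ.ord lam.ord (e p).2.2) ∧
      -- order-isomorphism onto its image
      (∀ p ∈ D, ∀ q ∈ D, (LaverLE p q ↔
        LaverLE (e p).1 (e q).1 ∧ PFunLE (e p).2.1 (e q).2.1 ∧ LaverLE (e p).2.2 (e q).2.2)) ∧
      -- whose image is dense in the product
      (∀ t : LaverFun × PartFun × LaverFun, IsLaver μ.ord κ.ord t.1 →
        IsCol μ.ord κ.ord t.2.1 → IsLaver κ.ord lam.ord t.2.2 →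
        ∃ p ∈ D, LaverLE (e p).1 t.1 ∧ PFunLE (e p).2.1 t.2.1 ∧ LaverLE (e p).2.2 t.2.2) := by
  classical
  have hμκo : μ.ord < κ.ord := Cardinal.ord_lt_ord.mpr hμκ
  have hκlo : κ.ord < lam.ord := Cardinal.ord_lt_ord.mpr hκlam
  have hμlo : μ.ord < lam.ord := hμκo.trans hκlo
  have hμlim : Order.IsSuccLimit μ.ord := Cardinal.isSuccLimit_ord hμ.aleph0_le
  have hκlim : Order.IsSuccLimit κ.ord := Cardinal.isSuccLimit_ord hκ.aleph0_le
  have hμpos : 0 < μ.ord := hμlim.pos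
  have hκpos : 0 < κ.ord := hκlim.pos
  have hregκ : IsRegOrd κ.ord := ⟨by rw [Cardinal.card_ord]; exact hκ, by rw [Cardinal.card_ord]⟩
  have hlt1 : ∀ o : Ordinal, o < o + 1 := fun o => by
    rw [Ordinal.add_one_eq_succ]; exact Order.lt_succ o
  have hle1 : ∀ {i j : Ordinal}, i < j → i + 1 ≤ j := fun {i j} h => by
    rw [Ordinal.add_one_eq_succ]; exact Order.succ_le_of_lt h
  have key : ∀ δ s t : Ordinal, ∃ (be : PartFun → Ordinal) (bd : Ordinal → PartFun),
      (IsRegOrd δ → κ.ord < δ → δ < lam.ord → s < t → t < κ.ord →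
        (∀ g, Tot δ s t g → be g < δ ∧ bd (be g) = g) ∧
        (∀ v, v < δ → Tot δ s t (bd v) ∧ be (bd v) = v)) := by
    intro δ s t
    by_cases hc : IsRegOrd δ ∧ κ.ord < δ ∧ δ < lam.ord ∧ s < t ∧ t < κ.ord
    · obtain ⟨hreg, hκδ, hδl, hst, htκ⟩ := hc
      have hrefl : ∀ g : PartFun, Tot δ s t g → ∀ x : ↥(Set.Ico s t), ((g x.val).getD 0) < δ := by
        intro g hg x
        obtain ⟨b, hb⟩ := Option.isSome_iff_exists.mp ((hg.1 x.val).mpr (Set.mem_Ico.mp x.2))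
        rw [hb, Option.getD_some]; exact hg.2 x.val b hb
      have myeq : {g : PartFun // Tot δ s t g} ≃ (↥(Set.Ico s t) → ↥(Set.Iio δ)) := by
        refine ⟨fun g x => ⟨((g.val) x.val).getD 0, hrefl g.val g.2 x⟩,
          fun f => ⟨fun a => if h : a ∈ Set.Ico s t then some (f ⟨a, h⟩).val else none, ?_, ?_⟩,
          ?_, ?_⟩
        · intro a
          dsimp only
          constructor
          · intro ha
            by_cases h : a ∈ Set.Ico s t
            · exact Set.mem_Ico.mp h
            · rw [dif_neg h] at ha; simp at ha
          · intro ha; rw [dif_pos (Set.mem_Ico.mpr ha)]; rfl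
        · intro a b hb
          dsimp only at hb
          by_cases h : a ∈ Set.Ico s t
          · rw [dif_pos h, Option.some_inj] at hb; rw [← hb]; exact (f ⟨a, h⟩).2
          · rw [dif_neg h] at hb; exact absurd hb (by simp)
        · intro g
          apply Subtype.ext
          funext a
          dsimp only
          by_cases h : a ∈ Set.Ico s t
          · rw [dif_pos h]
            obtain ⟨b, hb⟩ := Option.isSome_iff_exists.mp ((g.2.1 a).mpr (Set.mem_Ico.mp h))
            rw [hb, Option.getD_some]
          · rw [dif_neg h]
            by_cases hs : (g.val a).isSome
            · exact absurd (Set.mem_Ico.mpr ((g.2.1 a).mp hs)) h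
            · exact (Option.not_isSome_iff_eq_none.mp hs).symm
        · intro f
          funext x
          apply Subtype.ext
          dsimp only
          rw [dif_pos x.2, Option.getD_some]
      have hco : Cardinal.mk {g : PartFun // Tot δ s t g} = Cardinal.mk ↥(Set.Iio δ) := by
        have hA1 : (1 : Cardinal) ≤ Cardinal.mk ↥(Set.Ico s t) :=
          Cardinal.one_le_iff_ne_zero.mpr (Cardinal.mk_ne_zero_iff.mpr
            ⟨⟨s, Set.mem_Ico.mpr ⟨le_refl s, hst⟩⟩⟩)
        have hB0 : Cardinal.lift.{1} δ.card ≠ 0 := by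
          simp only [ne_eq, Cardinal.lift_eq_zero, Ordinal.card_eq_zero]
          exact (hκpos.trans hκδ).ne'
        have h1 : Cardinal.mk ↥(Set.Ico s t) ≤ Cardinal.lift.{1} t.card := by
          rw [← Ordinal.mk_Iio_ordinal]
          exact Cardinal.mk_le_mk_of_subset Set.Ico_subset_Iio_self
        have h2 : (Cardinal.lift.{1} δ.card) ^ (Cardinal.lift.{1} t.card)
            = Cardinal.lift.{1} δ.card := by
          rw [← Cardinal.lift_power]
          refine congrArg _ (le_antisymm ?_ ?_)
          · exact (Cardinal.le_powerlt δ.card (Cardinal.lt_ord.mp htκ)).trans_eq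
              (hpow δ hreg hκδ hδl)
          · refine Cardinal.self_le_power _ ?_
            rw [Cardinal.one_le_iff_ne_zero, ne_eq, Ordinal.card_eq_zero]
            exact (((zero_le (a := s)).trans_lt hst).ne')
        calc Cardinal.mk {g : PartFun // Tot δ s t g}
            = Cardinal.mk (↥(Set.Ico s t) → ↥(Set.Iio δ)) := Cardinal.mk_congr myeq
          _ = (Cardinal.mk ↥(Set.Iio δ)) ^ (Cardinal.mk ↥(Set.Ico s t)) :=
              (Cardinal.power_def _ _).symm
          _ = Cardinal.mk ↥(Set.Iio δ) := by
              rw [Ordinal.mk_Iio_ordinal]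
              exact le_antisymm ((Cardinal.power_le_power_left hB0 h1).trans h2.le)
                (Cardinal.self_le_power _ hA1)
      obtain ⟨F⟩ := Cardinal.eq.mp hco
      refine ⟨fun g => if h : Tot δ s t g then (F ⟨g, h⟩).val else 0,
        fun v => if h : v < δ then (F.symm ⟨v, h⟩).val else (fun _ => none),
        fun _ _ _ _ _ => ⟨?_, ?_⟩⟩
      · intro g hg
        dsimp only
        rw [dif_pos hg]
        refine ⟨(F ⟨g, hg⟩).2, ?_⟩
        rw [dif_pos (Set.mem_Iio.mp (F ⟨g, hg⟩).2)]
        exact congrArg Subtype.val (F.symm_apply_apply ⟨g, hg⟩)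
      · intro v hv
        dsimp only
        rw [dif_pos hv]
        refine ⟨(F.symm ⟨v, hv⟩).2, ?_⟩
        rw [dif_pos (F.symm ⟨v, hv⟩).2]
        exact congrArg Subtype.val (F.apply_symm_apply ⟨v, hv⟩)
    · exact ⟨fun _ => 0, fun _ _ => none,
        fun h1 h2 h3 h4 h5 => absurd ⟨h1, h2, h3, h4, h5⟩ hc⟩

  choose be bd hbd using key
  refine ⟨{p | IsLaver μ.ord lam.ord p ∧ (p κ.ord).isSome ∧
      ∃ ξ < μ.ord, ∀ δ g, p δ = some g → ∀ i, (g i).isSome ↔ i < ξ},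
    fun p => (fun δ => if δ < κ.ord then p δ else none,
      (p κ.ord).getD (fun _ => none),
      fun δ => if κ.ord < δ then
        (p δ).map (fun u => decF bd κ.ord δ u ((p κ.ord).getD (fun _ => none)))
      else none),
    fun p hp => hp.1, ?_, ?_, ?_, ?_⟩
  · -- density of D
    intro r hr
    obtain ⟨hr1, hr2, ξ₀, hξ₀, hrb⟩ := hr
    have hcr : (fun δ => if δ = κ.ord then some (fillF ξ₀ ((r κ.ord).getD (fun _ => none)))
        else (r δ).map (fillF ξ₀)) κ.ord = some (fillF ξ₀ ((r κ.ord).getD (fun _ => none))) :=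
      if_pos rfl
    have hvals : ∀ a b, ((r κ.ord).getD (fun _ => none)) a = some b → b < κ.ord := by
      intro a b hab
      cases hrk : r κ.ord with
      | none => rw [hrk] at hab; exact absurd hab (by simp)
      | some g₀ =>
          rw [hrk] at hab
          exact (hrb κ.ord g₀ hrk a b hab).2
    refine ⟨fun δ => if δ = κ.ord then some (fillF ξ₀ ((r κ.ord).getD (fun _ => none)))
        else (r δ).map (fillF ξ₀), ⟨⟨?_, ?_, ξ₀, hξ₀, ?_⟩, ?_, ξ₀, hξ₀, ?_⟩, ?_⟩
    · -- domain regular + in interval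
      intro δ hδ
      by_cases h : δ = κ.ord
      · subst h
        exact ⟨hregκ, hμκo, hκlo⟩
      · have : (r δ).isSome := by
          have := hδ
          rw [ldom] at this
          simp only [Set.mem_setOf_eq, if_neg h, Option.isSome_map] at this
          exact this
        exact hr1 δ this
    · -- Easton
      refine isEaston_subset ?_ (isEaston_union (isEaston_singleton κ.ord) hr2)
      intro δ hδ
      by_cases h : δ = κ.ord
      · exact Or.inl h
      · refine Or.inr ?_
        have := hδ
        rw [ldom] at this
        simp only [Set.mem_setOf_eq, if_neg h, Option.isSome_map] at this
        exact this
    · -- bound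
      intro δ g hg a b hab
      by_cases h : δ = κ.ord
      · subst h
        dsimp only at hg
        rw [if_pos rfl, Option.some_inj] at hg
        subst hg
        exact fillF_lt hvals hκpos a b hab
      · dsimp only at hg
        rw [if_neg h] at hg
        obtain ⟨g₀, hg₀, hfg⟩ := Option.map_eq_some_iff.mp hg
        subst hfg
        have hμδ : 0 < δ := hμpos.trans (hr1 δ (by rw [ldom]; simp [hg₀])).2.1
        exact fillF_lt (fun a' b' h' => (hrb δ g₀ hg₀ a' b' h').2) hμδ a b hab
    · -- κ coordinate defined
      rw [hcr]
      rfl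
    · -- uniform totality
      intro δ g hg i
      by_cases h : δ = κ.ord
      · subst h
        dsimp only at hg
        rw [if_pos rfl, Option.some_inj] at hg
        subst hg
        exact fillF_tot ξ₀ _ i
      · dsimp only at hg
        rw [if_neg h] at hg
        obtain ⟨g₀, hg₀, hfg⟩ := Option.map_eq_some_iff.mp hg
        subst hfg
        exact fillF_tot ξ₀ g₀ i
    · -- LaverLE d r
      intro δ g hg
      by_cases h : δ = κ.ord
      · subst h
        refine ⟨fillF ξ₀ ((r κ.ord).getD (fun _ => none)), if_pos rfl, ?_⟩
        have hgd : (r κ.ord).getD (fun _ => none) = g := by rw [hg]; rfl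
        rw [hgd]
        exact fillF_ext (fun a b hab => (hrb κ.ord g hg a b hab).1)
      · exact ⟨fillF ξ₀ g, by dsimp only; rw [if_neg h, hg]; rfl,
          fillF_ext (fun a b hab => (hrb δ g hg a b hab).1)⟩
  · -- components legit
    intro p hp
    obtain ⟨hpL, hpκ, ξp, hξp, hptot⟩ := hp
    obtain ⟨hp1, hp2, ξ₀, hξ₀, hpb⟩ := hpL
    obtain ⟨cp, hcp⟩ := Option.isSome_iff_exists.mp hpκ
    have hcpeq : (p κ.ord).getD (fun _ => none) = cp := by rw [hcp]; rfl
    have hcpv : ∀ j, ((cp j).getD 0) < κ.ord := by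
      intro j
      cases hj : cp j with
      | none => simpa [hj] using hκpos
      | some v => simpa [hj] using (hpb κ.ord cp hcp j v hj).2
    refine ⟨⟨?_, ?_, ξ₀, hξ₀, ?_⟩, ⟨?_, ?_⟩, ?_, ?_, ⟨blk cp ξp, ?_, ?_⟩⟩
    · -- e1 domain
      intro δ hδ
      have hδ' := hδ
      rw [ldom] at hδ'
      simp only [Set.mem_setOf_eq] at hδ'
      by_cases h : δ < κ.ord
      · rw [if_pos h] at hδ'
        obtain ⟨hreg, hio⟩ := hp1 δ hδ'
        exact ⟨hreg, hio.1, h⟩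
      · rw [if_neg h] at hδ'
        exact absurd hδ' (by simp)
    · -- e1 Easton
      refine isEaston_subset ?_ hp2
      intro δ hδ
      rw [ldom] at hδ ⊢
      simp only [Set.mem_setOf_eq] at hδ ⊢
      by_cases h : δ < κ.ord
      · rwa [if_pos h] at hδ
      · rw [if_neg h] at hδ; exact absurd hδ (by simp)
    · -- e1 bound
      intro δ g hg a b hab
      dsimp only at hg
      by_cases h : δ < κ.ord
      · rw [if_pos h] at hg
        exact hpb δ g hg a b hab
      · rw [if_neg h] at hg
        exact absurd hg (by simp)
    · -- IsCol values
      intro a b hab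
      dsimp only at hab
      rw [hcpeq] at hab
      have ha : a < ξp := (hptot κ.ord cp hcp a).mp (by rw [hab]; rfl)
      exact ⟨ha.trans hξp, (hpb κ.ord cp hcp a b hab).2⟩
    · -- IsCol size
      have hdom : pdom ((p κ.ord).getD (fun _ => none)) = Set.Iio ξp := by
        rw [hcpeq]
        ext a
        rw [pdom, Set.mem_setOf_eq, Set.mem_Iio]
        exact hptot κ.ord cp hcp a
      rw [hdom, Ordinal.mk_Iio_ordinal, Cardinal.card_ord]
      exact Cardinal.lift_lt.mpr (Cardinal.lt_ord.mp hξp)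
    · -- e3 domain
      intro δ hδ
      have hδ' := hδ
      rw [ldom] at hδ'
      simp only [Set.mem_setOf_eq] at hδ'
      by_cases h : κ.ord < δ
      · rw [if_pos h, Option.isSome_map] at hδ'
        obtain ⟨hreg, hio⟩ := hp1 δ hδ'
        exact ⟨hreg, h, hio.2⟩
      · rw [if_neg h] at hδ'
        exact absurd hδ' (by simp)
    · -- e3 Easton
      refine isEaston_subset ?_ hp2
      intro δ hδ
      rw [ldom] at hδ ⊢
      simp only [Set.mem_setOf_eq] at hδ ⊢
      by_cases h : κ.ord < δ
      · rw [if_pos h, Option.isSome_map] at hδ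
        exact hδ
      · rw [if_neg h] at hδ; exact absurd hδ (by simp)
    · -- blk cp ξp < κ.ord
      exact blk_lt_ord hκ cp hcpv ξp (hξp.trans hμκo)
    · -- e3 bound
      intro δ g hg a b hab
      dsimp only at hg
      by_cases h : κ.ord < δ
      · rw [if_pos h] at hg
        obtain ⟨u, hu, hgu⟩ := Option.map_eq_some_iff.mp hg
        subst hgu
        rw [hcpeq] at hab
        obtain ⟨i, hOK, hval⟩ := decF_some bd hab
        obtain ⟨hs, ht, htκ', v, hv, hvδ⟩ := hOK
        have hiξ : i < ξp := (hptot δ u hu i).mp (by rw [hv]; rfl)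
        have hi1 : i + 1 ≤ ξp := by
          rw [Ordinal.add_one_eq_succ]
          exact Order.succ_le_of_lt hiξ
        refine ⟨ht.trans_le (blk_mono cp hi1), ?_⟩
        have hδreg := hp1 δ (by rw [ldom]; simp [hu])
        have hspec := (hbd δ (blk cp i) (blk cp (i + 1)) hδreg.1 h hδreg.2.2
          (blk_lt_succ cp i) htκ').2 v hvδ
        rw [hv, Option.getD_some] at hval
        exact hspec.1.2 a b hval
      · rw [if_neg h] at hg
        exact absurd hg (by simp)
  · -- order iso
    intro p hp q hq
    obtain ⟨hpL, hpκ, ξp, hξp, hptot⟩ := hp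
    obtain ⟨hp1, hp2, ξp0, hξp0, hpb⟩ := hpL
    obtain ⟨cp, hcp⟩ := Option.isSome_iff_exists.mp hpκ
    have hcpeq : (p κ.ord).getD (fun _ => none) = cp := by rw [hcp]; rfl
    obtain ⟨hqL, hqκ, ξq, hξq, hqtot⟩ := hq
    obtain ⟨hq1, hq2, ξq0, hξq0, hqb⟩ := hqL
    obtain ⟨cq, hcq⟩ := Option.isSome_iff_exists.mp hqκ
    have hcqeq : (q κ.ord).getD (fun _ => none) = cq := by rw [hcq]; rfl
    have hcqv : ∀ j, ((cq j).getD 0) < κ.ord := by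
      intro j
      cases hj : cq j with
      | none => simpa [hj] using hκpos
      | some v => simpa [hj] using (hqb κ.ord cq hcq j v hj).2
    constructor
    · intro hLE
      have hPFc : PFunLE cp cq := by
        obtain ⟨g', hg', hPF⟩ := hLE κ.ord cq hcq
        rw [hcp] at hg'
        injection hg' with h'
        subst h'
        exact hPF
      have hagree : ∀ j, j < ξq → cp j = cq j := by
        intro j hj
        obtain ⟨v, hv⟩ := Option.isSome_iff_exists.mp ((hqtot κ.ord cq hcq j).mpr hj)
        rw [hv, hPFc j v hv]
      refine ⟨?_, ?_, ?_⟩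
      · intro δ g hg
        dsimp only at hg ⊢
        by_cases h : δ < κ.ord
        · rw [if_pos h] at hg ⊢
          exact hLE δ g hg
        · rw [if_neg h] at hg
          exact absurd hg (by simp)
      · dsimp only
        rw [hcpeq, hcqeq]
        exact hPFc
      · intro δ g hg
        dsimp only at hg ⊢
        by_cases h : κ.ord < δ
        · rw [if_pos h] at hg ⊢
          obtain ⟨uq, huq, hgq⟩ := Option.map_eq_some_iff.mp hg
          obtain ⟨up, hup, hPFu⟩ := hLE δ uq huq
          refine ⟨decF bd κ.ord δ up ((p κ.ord).getD (fun _ => none)), by rw [hup]; rfl, ?_⟩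
          subst hgq
          intro a b hab
          rw [hcqeq] at hab
          rw [hcpeq]
          obtain ⟨i, hOK, hval⟩ := decF_some bd hab
          obtain ⟨hs, ht, htκ', v, hv, hvδ⟩ := hOK
          have hiξ : i < ξq := (hqtot δ uq huq i).mp (by rw [hv]; rfl)
          have hag : ∀ j, j < i + 1 → cp j = cq j := by
            intro j hj
            rw [Ordinal.add_one_eq_succ] at hj
            exact hagree j ((Order.lt_succ_iff.mp hj).trans_lt hiξ)
          have hb1 : blk cp i = blk cq i :=
            blk_congr cp cq i fun j hj => hag j (hj.trans (hlt1 i))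
          have hb2 : blk cp (i + 1) = blk cq (i + 1) := blk_congr cp cq (i + 1) hag
          have hOKp : DecOK κ.ord δ up cp a i :=
            ⟨by rw [hb1]; exact hs, by rw [hb2]; exact ht, by rw [hb2]; exact htκ',
              v, hPFu i v hv, hvδ⟩
          rw [decF_eq bd hOKp, hPFu i v hv, Option.getD_some, hb1, hb2]
          rw [hv, Option.getD_some] at hval
          exact hval
        · rw [if_neg h] at hg
          exact absurd hg (by simp)
    · rintro ⟨h1, h2, h3⟩
      dsimp only at h1 h2 h3
      rw [hcpeq, hcqeq] at h2
      have hagree : ∀ j, j < ξq → cp j = cq j := by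
        intro j hj
        obtain ⟨v, hv⟩ := Option.isSome_iff_exists.mp ((hqtot κ.ord cq hcq j).mpr hj)
        rw [hv]
        exact h2 j v hv
      have hξqp : ξq ≤ ξp := by
        refine le_of_forall_lt fun j hj => ?_
        have hsome : (cp j).isSome := by
          rw [hagree j hj]
          exact (hqtot κ.ord cq hcq j).mpr hj
        exact (hptot κ.ord cp hcp j).mp hsome
      intro δ g hg
      rcases lt_trichotomy δ κ.ord with h | h | h
      · obtain ⟨g', hg', hPF⟩ := h1 δ g (show (if δ < κ.ord then q δ else none) = some g by
          rw [if_pos h]; exact hg)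
        try dsimp only at hg'
        rw [if_pos h] at hg'
        exact ⟨g', hg', hPF⟩
      · subst h
        rw [hcq] at hg
        injection hg with hg'
        subst hg'
        exact ⟨cp, hcp, h2⟩
      · obtain ⟨g3, hg3, hPF3⟩ := h3 δ (decF bd κ.ord δ g ((q κ.ord).getD (fun _ => none)))
          (show (if κ.ord < δ then
              Option.map (fun u => decF bd κ.ord δ u ((q κ.ord).getD (fun _ => none))) (q δ)
            else none) = some (decF bd κ.ord δ g ((q κ.ord).getD (fun _ => none))) by
            rw [if_pos h, hg]; rfl)
        try dsimp only at hg3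
        rw [if_pos h] at hg3
        obtain ⟨up, hup, hgu⟩ := Option.map_eq_some_iff.mp hg3
        try dsimp only at hgu
        rw [hcpeq] at hgu
        subst hgu
        rw [hcqeq] at hPF3
        refine ⟨up, hup, ?_⟩
        intro i v hv
        have hiξ : i < ξq := (hqtot δ g hg i).mp (by rw [hv]; rfl)
        obtain ⟨v', hv'⟩ := Option.isSome_iff_exists.mp
          ((hptot δ up hup i).mpr (hiξ.trans_le hξqp))
        have hδreg := hq1 δ (by rw [ldom]; simp [hg])
        have hag : ∀ j, j < i + 1 → cp j = cq j := by
          intro j hj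
          rw [Ordinal.add_one_eq_succ] at hj
          exact hagree j ((Order.lt_succ_iff.mp hj).trans_lt hiξ)
        have hb1 : blk cp i = blk cq i :=
          blk_congr cp cq i fun j hj => hag j (hj.trans (hlt1 i))
        have hb2 : blk cp (i + 1) = blk cq (i + 1) := blk_congr cp cq (i + 1) hag
        have hi1κ : i + 1 < κ.ord := ((hle1 hiξ).trans_lt hξq).trans hμκo
        have htκ' : blk cq (i + 1) < κ.ord := blk_lt_ord hκ cq hcqv (i + 1) hi1κ
        have hslt : blk cq i < blk cq (i + 1) := blk_lt_succ cq i
        have hvδ : v < δ := (hqb δ g hg i v hv).2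
        have hv'δ : v' < δ := (hpb δ up hup i v' hv').2
        have hspecq := hbd δ (blk cq i) (blk cq (i + 1)) hδreg.1 h hδreg.2.2 hslt htκ'
        have hTq := (hspecq.2 v hvδ).1
        have hTp := (hspecq.2 v' hv'δ).1
        have hdq : ∀ a, blk cq i ≤ a → a < blk cq (i + 1) →
            decF bd κ.ord δ g cq a = bd δ (blk cq i) (blk cq (i + 1)) v a := by
          intro a ha1 ha2
          rw [decF_eq bd (show DecOK κ.ord δ g cq a i from ⟨ha1, ha2, htκ', v, hv, hvδ⟩),
            hv, Option.getD_some]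
        have hdp : ∀ a, blk cq i ≤ a → a < blk cq (i + 1) →
            decF bd κ.ord δ up cp a = bd δ (blk cq i) (blk cq (i + 1)) v' a := by
          intro a ha1 ha2
          rw [decF_eq bd (show DecOK κ.ord δ up cp a i from
            ⟨by rw [hb1]; exact ha1, by rw [hb2]; exact ha2, by rw [hb2]; exact htκ',
              v', hv', hv'δ⟩), hv', Option.getD_some, hb1, hb2]
        have hfun : bd δ (blk cq i) (blk cq (i + 1)) v'
            = bd δ (blk cq i) (blk cq (i + 1)) v := by
          funext a
          by_cases hmem : blk cq i ≤ a ∧ a < blk cq (i + 1)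
          · obtain ⟨b, hbq⟩ := Option.isSome_iff_exists.mp ((hTq.1 a).mpr hmem)
            have h5 : decF bd κ.ord δ g cq a = some b := by
              rw [hdq a hmem.1 hmem.2, hbq]
            have h6 := hPF3 a b h5
            rw [hdp a hmem.1 hmem.2] at h6
            rw [h6, hbq]
          · have hnq : bd δ (blk cq i) (blk cq (i + 1)) v a = none :=
              Option.not_isSome_iff_eq_none.mp (by rw [hTq.1 a]; exact hmem)
            have hnp : bd δ (blk cq i) (blk cq (i + 1)) v' a = none :=
              Option.not_isSome_iff_eq_none.mp (by rw [hTp.1 a]; exact hmem)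
            rw [hnq, hnp]
        have hveq : v' = v := by
          have e1 := (hspecq.2 v hvδ).2
          have e2 := (hspecq.2 v' hv'δ).2
          rw [← e2, ← e1, hfun]
        rw [hv', hveq]
  · -- density of image
    rintro ⟨t1, t2, t3⟩ h1 h2 h3
    dsimp only at h1 h2 h3 ⊢
    obtain ⟨h11, h12, ξ₁, hξ₁, h1b⟩ := h1
    obtain ⟨h21, h22⟩ := h2
    obtain ⟨h31, h32, ξ₃, hξ₃, h3b⟩ := h3
    have hbd2 : ∃ ξ₂, ξ₂ < μ.ord ∧ ∀ a b, t2 a = some b → a < ξ₂ := by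
      by_cases hne : Nonempty ↥(pdom t2)
      · have hsub : ∀ x : ↥(pdom t2),
            (fun x : ↥(pdom t2) => Ordinal.lift.{1} x.val) x < Ordinal.lift.{1} μ.ord := by
          intro x
          rw [Ordinal.lift_lt]
          obtain ⟨b, hb⟩ := Option.isSome_iff_exists.mp x.2
          exact (h21 x.val b hb).1
        have hcard : Cardinal.lift.{0} (Cardinal.mk ↥(pdom t2))
            < (Ordinal.lift.{1} μ.ord).cof := by
          rw [← Ordinal.lift_cof, hμ.cof_eq, Cardinal.lift_id']
          rw [Cardinal.card_ord] at h22
          exact h22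
        have hsup := Ordinal.iSup_lt_ord_lift hcard hsub
        obtain ⟨ξ', hξ'⟩ := Ordinal.mem_range_lift_of_le (le_of_lt hsup)
        have hξ'μ : ξ' < μ.ord := Ordinal.lift_lt.mp (by rw [hξ']; exact hsup)
        refine ⟨ξ' + 1, ?_, ?_⟩
        · rw [Ordinal.add_one_eq_succ]
          exact hμlim.succ_lt hξ'μ
        · intro a b hab
          have hmem : a ∈ pdom t2 := by rw [pdom]; simp [hab]
          have hla : Ordinal.lift.{1} a ≤
              iSup (fun x : ↥(pdom t2) => Ordinal.lift.{1} x.val) :=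
            Ordinal.le_iSup (fun x : ↥(pdom t2) => Ordinal.lift.{1} x.val) ⟨a, hmem⟩
          rw [← hξ'] at hla
          exact (Ordinal.lift_le.mp hla).trans_lt (hlt1 ξ')
      · refine ⟨1, ?_, ?_⟩
        · exact Ordinal.one_lt_of_isSuccLimit hμlim
        · intro a b hab
          exact absurd (⟨⟨a, by rw [pdom, Set.mem_setOf_eq, hab]; rfl⟩⟩ : Nonempty ↥(pdom t2)) hne
    obtain ⟨ξ₂, hξ₂, h2dom⟩ := hbd2
    have hξμ : max ξ₁ ξ₂ + 1 < μ.ord := by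
      rw [Ordinal.add_one_eq_succ]
      exact hμlim.succ_lt (max_lt hξ₁ hξ₂)
    have hcj₀ : (fun i => if i < max ξ₁ ξ₂ + 1 then some ((t2 i).getD ξ₃) else none)
        (max ξ₁ ξ₂) = some ξ₃ := by
      dsimp only
      rw [if_pos (hlt1 (max ξ₁ ξ₂))]
      cases ht2 : t2 (max ξ₁ ξ₂) with
      | none => rfl
      | some b => exact absurd (h2dom (max ξ₁ ξ₂) b ht2) (not_lt.mpr (le_max_right ξ₁ ξ₂))
    set ξ : Ordinal := max ξ₁ ξ₂ + 1 with hξdef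
    set c : PartFun := fun i => if i < ξ then some ((t2 i).getD ξ₃) else none with hcdef
    have hcv : ∀ j, ((c j).getD 0) < κ.ord := by
      intro j
      rw [hcdef]
      dsimp only
      split
      · cases ht2 : t2 j with
        | none => simpa [ht2] using hξ₃
        | some b => simpa [ht2] using (h21 j b ht2).2
      · simpa using hκpos
    have hcvs : ∀ j b, c j = some b → b < κ.ord := by
      intro j b hj
      rw [hcdef] at hj
      dsimp only at hj
      split at hj
      · rw [Option.some_inj] at hj
        subst hj
        cases ht2 : t2 j with
        | none => simpa [ht2] using hξ₃
        | some b' => simpa [ht2] using (h21 j b' ht2).2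
      · exact absurd hj (by simp)
    have hcdom : ∀ i, (c i).isSome ↔ i < ξ := by
      intro i
      rw [hcdef]
      dsimp only
      split <;> simp_all
    have hη : ξ₃ < blk c ξ := by
      have h₁ : ξ₃ + 1 ≤ blk c (max ξ₁ ξ₂ + 1) := by
        rw [blk_succ]
        have : (c (max ξ₁ ξ₂)).getD 0 = ξ₃ := by rw [hcj₀]; rfl
        rw [this]
        exact le_max_right _ _
      have h₂ : ξ₃ < ξ₃ + 1 := hlt1 ξ₃
      exact h₂.trans_le (h₁.trans (le_of_eq rfl))
    have hPFct2 : PFunLE c t2 := by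
      intro a b hab
      have ha : a < ξ := (h2dom a b hab).trans_le
        ((le_max_right ξ₁ ξ₂).trans (le_of_lt (hlt1 (max ξ₁ ξ₂))))
      rw [hcdef]
      dsimp only
      rw [if_pos ha, hab]
      rfl
    refine ⟨fun δ => if δ = κ.ord then some c
        else if δ < κ.ord then (t1 δ).map (fillF ξ)
        else (t3 δ).map (fun T => encF be δ ξ c T),
      ⟨⟨?_, ?_, ξ, hξμ, ?_⟩, ?_, ξ, hξμ, ?_⟩, ?_, ?_, ?_⟩
    · -- domain condition
      intro δ hδ
      have hδ' := hδ
      rw [ldom] at hδ'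
      simp only [Set.mem_setOf_eq] at hδ'
      by_cases h : δ = κ.ord
      · subst h
        exact ⟨hregκ, hμκo, hκlo⟩
      · rw [if_neg h] at hδ'
        by_cases h' : δ < κ.ord
        · rw [if_pos h', Option.isSome_map] at hδ'
          obtain ⟨hreg, hio⟩ := h11 δ hδ'
          exact ⟨hreg, hio.1, hio.2.trans hκlo⟩
        · rw [if_neg h', Option.isSome_map] at hδ'
          obtain ⟨hreg, hio⟩ := h31 δ hδ'
          exact ⟨hreg, hμκo.trans hio.1, hio.2⟩
    · -- Easton
      refine isEaston_subset ?_ (isEaston_union (isEaston_singleton κ.ord)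
        (isEaston_union h12 h32))
      intro δ hδ
      rw [ldom] at hδ
      simp only [Set.mem_setOf_eq] at hδ
      by_cases h : δ = κ.ord
      · exact Or.inl h
      · rw [if_neg h] at hδ
        by_cases h' : δ < κ.ord
        · rw [if_pos h', Option.isSome_map] at hδ
          exact Or.inr (Or.inl hδ)
        · rw [if_neg h', Option.isSome_map] at hδ
          exact Or.inr (Or.inr hδ)
    · -- bound
      intro δ g hg a b hab
      dsimp only at hg
      by_cases h : δ = κ.ord
      · subst h
        rw [if_pos rfl, Option.some_inj] at hg
        subst hg
        refine ⟨(hcdom a).mp (by rw [hab]; rfl), hcvs a b hab⟩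
      · rw [if_neg h] at hg
        by_cases h' : δ < κ.ord
        · rw [if_pos h'] at hg
          obtain ⟨g₀, hg₀, hfg⟩ := Option.map_eq_some_iff.mp hg
          subst hfg
          have hμδ : 0 < δ := hμpos.trans (h11 δ (by rw [ldom]; simp [hg₀])).2.1
          exact fillF_lt (fun a' b' hb' => (h1b δ g₀ hg₀ a' b' hb').2) hμδ a b hab
        · rw [if_neg h'] at hg
          obtain ⟨T, hT, hfg⟩ := Option.map_eq_some_iff.mp hg
          subst hfg
          obtain ⟨haξ, hbe⟩ := encF_val hab
          obtain ⟨hreg, hio⟩ := h31 δ (by rw [ldom]; simp [hT])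
          have hδpos : 0 < δ := hκpos.trans hio.1
          have hiκ : a + 1 < κ.ord := (hle1 haξ).trans_lt (hξμ.trans hμκo)
          have htκ' : blk c (a + 1) < κ.ord := blk_lt_ord hκ c hcv (a + 1) hiκ
          have hspec := hbd δ (blk c a) (blk c (a + 1)) hreg hio.1 hio.2
            (blk_lt_succ c a) htκ'
          refine ⟨haξ, ?_⟩
          rw [hbe]
          exact (hspec.1 _ (clipF_tot hδpos T)).1
    · -- κ coordinate defined
      dsimp only
      rw [if_pos rfl]
      rfl
    · -- uniform totality
      intro δ g hg i
      dsimp only at hg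
      by_cases h : δ = κ.ord
      · subst h
        rw [if_pos rfl, Option.some_inj] at hg
        subst hg
        exact hcdom i
      · rw [if_neg h] at hg
        by_cases h' : δ < κ.ord
        · rw [if_pos h'] at hg
          obtain ⟨g₀, hg₀, hfg⟩ := Option.map_eq_some_iff.mp hg
          subst hfg
          exact fillF_tot ξ g₀ i
        · rw [if_neg h'] at hg
          obtain ⟨T, hT, hfg⟩ := Option.map_eq_some_iff.mp hg
          subst hfg
          exact encF_tot be δ ξ c T i
    · -- e1 ≤ t1
      intro δ g hg
      obtain ⟨hreg, hio⟩ := h11 δ (by rw [ldom]; simp [hg])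
      have hδκ : δ < κ.ord := hio.2
      have hδne : δ ≠ κ.ord := ne_of_lt hδκ
      refine ⟨fillF ξ g, ?_, fillF_ext (fun a b hab =>
        lt_of_lt_of_le (h1b δ g hg a b hab).1
          ((le_max_left ξ₁ ξ₂).trans (le_of_lt (hlt1 (max ξ₁ ξ₂)))))⟩
      dsimp only
      rw [if_pos hδκ, if_neg hδne, if_pos hδκ, hg]
      rfl
    · -- e2 ≤ t2
      dsimp only
      rw [if_pos rfl]
      intro a b hab
      exact hPFct2 a b hab
    · -- e3 ≤ t3
      intro δ T hT
      obtain ⟨hreg, hio⟩ := h31 δ (by rw [ldom]; simp [hT])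
      have hκδ : κ.ord < δ := hio.1
      have hδne : δ ≠ κ.ord := ne_of_gt hκδ
      have hnlt : ¬ δ < κ.ord := not_lt.mpr (le_of_lt hκδ)
      refine ⟨decF bd κ.ord δ (encF be δ ξ c T) c, ?_, ?_⟩
      · dsimp only
        rw [if_pos hκδ, if_pos rfl, if_neg hδne, if_neg hnlt, hT]
        rfl
      · intro a b hab
        have haξ₃ : a < ξ₃ := (h3b δ T hT a b hab).1
        have hbδ : b < δ := (h3b δ T hT a b hab).2
        obtain ⟨i, hiξ, hs, ht⟩ := blk_find c (haξ₃.trans hη)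
        have hiκ : i + 1 < κ.ord := (hle1 hiξ).trans_lt (hξμ.trans hμκo)
        have htκ' : blk c (i + 1) < κ.ord := blk_lt_ord hκ c hcv (i + 1) hiκ
        have hδpos : 0 < δ := hκpos.trans hκδ
        have hspec := hbd δ (blk c i) (blk c (i + 1)) hreg hκδ hio.2
          (blk_lt_succ c i) htκ'
        have henc := hspec.1 _ (clipF_tot hδpos T)
        have heq := encF_eq (be := be) (δ := δ) c (T := T) hiξ
        have hOK : DecOK κ.ord δ (encF be δ ξ c T) c a i :=
          ⟨hs, ht, htκ', _, heq, henc.1⟩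
        rw [decF_eq bd hOK, heq, Option.getD_some, henc.2]
        exact clipF_val hab hbδ hs ht
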